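/- In 2-neighbour bootstrap percolation on [n]^2, for any percolating set A of size exactly n, every vertex that becomes infected after time 0 becomes infected by virtue of exactly 2 infected neighbours, and no two adjacent vertices become infected at the same time step unless one of them is a corner. -/
import Mathlib


/-- The grid `[n]^d = {1,...,n}^d`, embedded in `ℕ^d`. -/
def gridSet (n d : ℕ) : Set (Fin d → ℕ) := {v | ∀ i, 1 ≤ v i ∧ v i ≤ n}

/-- Adjacency: differ by 1 in exactly one coordinate. -/
def gridAdj {d : ℕ} (u v : Fin d → ℕ) : Prop :=
  ∃ j, (u j = v j + 1 ∨ v j = u j + 1) ∧ ∀ i, i ≠ j → u i = v i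

/-- One round of `r`-neighbour bootstrap percolation on `[n]^d`. -/
def bpStep (n d r : ℕ) (S : Set (Fin d → ℕ)) : Set (Fin d → ℕ) :=
  S ∪ {v ∈ gridSet n d | r ≤ {u ∈ S | gridAdj u v}.ncard}

/-- Infected set after `t` rounds, starting from `A`. -/
def infected (n d r : ℕ) (A : Set (Fin d → ℕ)) (t : ℕ) : Set (Fin d → ℕ) :=
  (bpStep n d r)^[t] A

/-- The closure of `A`: all eventually infected vertices. -/
def bpClosure (n d r : ℕ) (A : Set (Fin d → ℕ)) : Set (Fin d → ℕ) :=
  ⋃ t, infected n d r A t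

/-- `A` percolates if every grid vertex is eventually infected. -/
def percolates (n d r : ℕ) (A : Set (Fin d → ℕ)) : Prop :=
  gridSet n d ⊆ bpClosure n d r A

/-- Percolation time: least `t` with the whole grid infected. -/
noncomputable def percTime (n d r : ℕ) (A : Set (Fin d → ℕ)) : ℕ :=
  sInf {t | gridSet n d ⊆ infected n d r A t}

/-- `V_k`: grid vertices of coordinate sum `k`. -/
def hyperplane (n d k : ℕ) : Set (Fin d → ℕ) := {v ∈ gridSet n d | ∑ i, v i = k}

/-- The "cyclic combination" set `A = ⋃_{i=1}^d V_{in}`. -/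
def diagUnion (n d : ℕ) : Set (Fin d → ℕ) :=
  ⋃ i ∈ Finset.Icc 1 d, hyperplane n d (i * n)

/-- A corner of the grid `[n]^2`. -/
def isCorner (n : ℕ) (v : Fin 2 → ℕ) : Prop :=
  (v 0 = 1 ∨ v 0 = n) ∧ (v 1 = 1 ∨ v 1 = n)


open scoped Classical

abbrev V2 := Fin 2 → ℕ

lemma eq_vec_iff {u : V2} {a b : ℕ} : u = ![a, b] ↔ u 0 = a ∧ u 1 = b := by
  constructor
  · rintro rfl; simp
  · rintro ⟨h0, h1⟩; funext i; fin_cases i <;> simpa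

lemma adj_iff {u v : V2} : gridAdj u v ↔
    ((u 0 = v 0 + 1 ∨ v 0 = u 0 + 1) ∧ u 1 = v 1) ∨
    ((u 1 = v 1 + 1 ∨ v 1 = u 1 + 1) ∧ u 0 = v 0) := by
  unfold gridAdj
  rw [Fin.exists_fin_two]
  simp [Fin.forall_fin_two]

def nbr (v : V2) : Finset V2 :=
  {![v 0 + 1, v 1], ![v 0 - 1, v 1], ![v 0, v 1 + 1], ![v 0, v 1 - 1]}

lemma mem_nbr {u v : V2} : u ∈ nbr v ↔
    (u 0 = v 0 + 1 ∧ u 1 = v 1) ∨ (u 0 = v 0 - 1 ∧ u 1 = v 1) ∨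
    (u 0 = v 0 ∧ u 1 = v 1 + 1) ∨ (u 0 = v 0 ∧ u 1 = v 1 - 1) := by
  simp only [nbr, Finset.mem_insert, Finset.mem_singleton, eq_vec_iff, Matrix.cons_val_zero, Matrix.cons_val_one, Matrix.head_cons]

lemma adj_symm {u v : V2} (h : gridAdj u v) : gridAdj v u := by
  obtain ⟨j, hj, hall⟩ := h
  exact ⟨j, hj.symm, fun i hi => (hall i hi).symm⟩

lemma adj_char {u v : V2} (h0 : 1 ≤ v 0) (h1 : 1 ≤ v 1) : gridAdj u v ↔ u ∈ nbr v := by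
  rw [adj_iff, mem_nbr]; omega

lemma nbr_card {v : V2} (h0 : 1 ≤ v 0) (h1 : 1 ≤ v 1) : (nbr v).card = 4 := by
  rw [nbr]
  rw [Finset.card_insert_of_notMem, Finset.card_insert_of_notMem,
    Finset.card_insert_of_notMem, Finset.card_singleton]
  · simp only [Finset.mem_singleton, eq_vec_iff, Matrix.cons_val_zero, Matrix.cons_val_one, Matrix.head_cons]; omega
  · simp only [Finset.mem_insert, Finset.mem_singleton, eq_vec_iff, Matrix.cons_val_zero, Matrix.cons_val_one, Matrix.head_cons]; omega
  · simp only [Finset.mem_insert, Finset.mem_singleton, eq_vec_iff, Matrix.cons_val_zero, Matrix.cons_val_one, Matrix.head_cons]; omega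

lemma nbr_card_le (v : V2) : (nbr v).card ≤ 4 := by
  rw [nbr]
  apply le_trans (Finset.card_insert_le _ _)
  have := Finset.card_insert_le (![v 0 - 1, v 1]) ({![v 0, v 1 + 1], ![v 0, v 1 - 1]} : Finset V2)
  have := Finset.card_insert_le (![v 0, v 1 + 1]) ({![v 0, v 1 - 1]} : Finset V2)
  simp only [Finset.card_singleton] at *
  omega

lemma sum_nbr {v : V2} (h0 : 1 ≤ v 0) (h1 : 1 ≤ v 1) (g : V2 → ℕ) :
    ∑ u ∈ nbr v, g u =
      g ![v 0 + 1, v 1] + g ![v 0 - 1, v 1] + g ![v 0, v 1 + 1] + g ![v 0, v 1 - 1] := by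
  rw [nbr]
  rw [Finset.sum_insert, Finset.sum_insert, Finset.sum_insert, Finset.sum_singleton]
  · ring
  · simp only [Finset.mem_singleton, eq_vec_iff, Matrix.cons_val_zero, Matrix.cons_val_one, Matrix.head_cons]; omega
  · simp only [Finset.mem_insert, Finset.mem_singleton, eq_vec_iff, Matrix.cons_val_zero, Matrix.cons_val_one, Matrix.head_cons]; omega
  · simp only [Finset.mem_insert, Finset.mem_singleton, eq_vec_iff, Matrix.cons_val_zero, Matrix.cons_val_one, Matrix.head_cons]; omega

/-- perimeter of a finite set of cells (all with coords ≥ 1). -/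
noncomputable def perim (S : Finset V2) : ℕ := ∑ v ∈ S, ((nbr v) \ S).card

noncomputable def degF (S : Finset V2) (v : V2) : ℕ := ((nbr v) ∩ S).card

lemma perim_le (S : Finset V2) : perim S ≤ 4 * S.card := by
  unfold perim
  calc ∑ v ∈ S, ((nbr v) \ S).card ≤ ∑ v ∈ S, 4 := by
        apply Finset.sum_le_sum
        intro v _
        exact le_trans (Finset.card_le_card (Finset.sdiff_subset)) (nbr_card_le v)
    _ = 4 * S.card := by rw [Finset.sum_const, smul_eq_mul, mul_comm]

lemma perim_step {S N : Finset V2} (hd : Disjoint S N)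
    (hS : ∀ v ∈ S, 1 ≤ v 0 ∧ 1 ≤ v 1) (hN : ∀ v ∈ N, 1 ≤ v 0 ∧ 1 ≤ v 1) :
    perim (S ∪ N) + (2 * ∑ v ∈ N, degF S v + ∑ v ∈ N, degF N v)
      = perim S + 4 * N.card := by
  have hC : ∑ v ∈ S, ((nbr v) ∩ N).card = ∑ v ∈ N, degF S v := by
    have e1 : ∀ v : V2, ((nbr v) ∩ N).card = ∑ u ∈ N, if u ∈ nbr v then 1 else 0 := by
      intro v
      rw [show (nbr v) ∩ N = N.filter (· ∈ nbr v) by ext u; simp [and_comm]]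
      exact Finset.card_filter _ _
    simp only [e1]
    rw [Finset.sum_comm]
    apply Finset.sum_congr rfl
    intro u hu
    have huc := hN u hu
    have : ∀ v ∈ S, (if u ∈ nbr v then 1 else 0) = (if v ∈ nbr u then 1 else 0) := by
      intro v hv
      have hvc := hS v hv
      have hiff : u ∈ nbr v ↔ v ∈ nbr u := by
        rw [← adj_char hvc.1 hvc.2, ← adj_char huc.1 huc.2]
        exact ⟨adj_symm, adj_symm⟩
      simp [hiff]
    rw [Finset.sum_congr rfl this]
    rw [← Finset.card_filter, degF]
    congr 1
    ext w; simp [and_comm]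
  have h1 : ∀ v ∈ S, (nbr v \ (S ∪ N)).card + (nbr v ∩ N).card = (nbr v \ S).card := by
    intro v _
    have e : nbr v \ (S ∪ N) = (nbr v \ S) \ N := by
      ext u; simp; tauto
    have e2 : (nbr v \ S) ∩ N = nbr v ∩ N := by
      ext u
      simp only [Finset.mem_inter, Finset.mem_sdiff]
      constructor
      · rintro ⟨⟨h1, _⟩, h2⟩; exact ⟨h1, h2⟩
      · rintro ⟨h1, h2⟩
        exact ⟨⟨h1, fun hs => (Finset.disjoint_left.mp hd) hs h2⟩, h2⟩
    rw [e, ← e2]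
    rw [add_comm, Finset.card_inter_add_card_sdiff]
  have h2 : ∀ v ∈ N, (nbr v \ (S ∪ N)).card + (degF S v + degF N v) = 4 := by
    intro v hv
    have hvc := hN v hv
    have e : nbr v ∩ (S ∪ N) = (nbr v ∩ S) ∪ (nbr v ∩ N) := Finset.inter_union_distrib_left _ _ _
    have hdisj : Disjoint (nbr v ∩ S) (nbr v ∩ N) :=
      Finset.disjoint_of_subset_left (Finset.inter_subset_right)
        (Finset.disjoint_of_subset_right (Finset.inter_subset_right) hd)
    have : (nbr v ∩ (S ∪ N)).card = degF S v + degF N v := by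
      rw [e, Finset.card_union_of_disjoint hdisj]; rfl
    rw [← this, add_comm, Finset.card_inter_add_card_sdiff]
    exact nbr_card hvc.1 hvc.2
  have hA : (∑ v ∈ S, (nbr v \ (S ∪ N)).card) + (∑ v ∈ S, (nbr v ∩ N).card)
      = perim S := by
    rw [← Finset.sum_add_distrib]
    exact Finset.sum_congr rfl h1
  have hB : (∑ v ∈ N, (nbr v \ (S ∪ N)).card) + (∑ v ∈ N, degF S v + ∑ v ∈ N, degF N v)
      = 4 * N.card := by
    rw [← Finset.sum_add_distrib, ← Finset.sum_add_distrib]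
    rw [Finset.sum_congr rfl h2, Finset.sum_const, smul_eq_mul, mul_comm]
  have hP : perim (S ∪ N) = (∑ v ∈ S, (nbr v \ (S ∪ N)).card)
      + (∑ v ∈ N, (nbr v \ (S ∪ N)).card) := by
    rw [perim, Finset.sum_union hd]
  omega

noncomputable def gridF (n : ℕ) : Finset V2 :=
  Fintype.piFinset (fun _ : Fin 2 => Finset.Icc 1 n)

lemma mem_gridF {n : ℕ} {v : V2} :
    v ∈ gridF n ↔ (1 ≤ v 0 ∧ v 0 ≤ n) ∧ (1 ≤ v 1 ∧ v 1 ≤ n) := by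
  simp [gridF, Fintype.mem_piFinset, Finset.mem_Icc, Fin.forall_fin_two]

lemma coe_gridF {n : ℕ} : (↑(gridF n) : Set V2) = gridSet n 2 := by
  ext v
  simp [mem_gridF, gridSet, Fin.forall_fin_two]

lemma card_filter_coord {n : ℕ} (i : Fin 2) (c : ℕ) (hc : 1 ≤ c) (hc' : c ≤ n) :
    ((gridF n).filter (fun v => v i = c)).card = n := by
  have : (gridF n).filter (fun v => v i = c)
      = (Finset.Icc 1 n).image (fun b => if i = 0 then ![c, b] else ![b, c]) := by
    ext v
    simp only [Finset.mem_filter, Finset.mem_image, Finset.mem_Icc, mem_gridF]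
    fin_cases i
    · simp only [if_pos rfl]
      constructor
      · rintro ⟨⟨h0, h1⟩, hv⟩
        exact ⟨v 1, h1, (eq_vec_iff.mpr ⟨hv, rfl⟩).symm⟩
      · rintro ⟨b, hb, rfl⟩
        simp [hc, hc', hb]
    · simp only [if_neg (by decide : (1 : Fin 2) ≠ 0)]
      constructor
      · rintro ⟨⟨h0, h1⟩, hv⟩
        exact ⟨v 0, h0, (eq_vec_iff.mpr ⟨rfl, hv⟩).symm⟩
      · rintro ⟨b, hb, rfl⟩
        simp [hc, hc', hb]
  rw [this, Finset.card_image_of_injective, Nat.card_Icc]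
  · omega
  · intro a b hab
    split_ifs at hab
    · simpa using congrFun hab 1
    · simpa using congrFun hab 0

lemma perim_grid {n : ℕ} (hn : 1 ≤ n) : perim (gridF n) = 4 * n := by
  unfold perim
  have key : ∀ v ∈ gridF n, ((nbr v) \ gridF n).card =
      ((if v 0 = n then 1 else 0) + (if v 0 = 1 then 1 else 0))
      + ((if v 1 = n then 1 else 0) + (if v 1 = 1 then 1 else 0)) := by
    intro v hv
    rw [mem_gridF] at hv
    obtain ⟨⟨ha1, ha2⟩, ⟨hb1, hb2⟩⟩ := hv
    rw [Finset.sdiff_eq_filter, Finset.card_filter, sum_nbr ha1 hb1]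
    have m1 : (![v 0 + 1, v 1] ∈ gridF n) ↔ ¬ (v 0 = n) := by
      simp [mem_gridF]; omega
    have m2 : (![v 0 - 1, v 1] ∈ gridF n) ↔ ¬ (v 0 = 1) := by
      simp [mem_gridF]; omega
    have m3 : (![v 0, v 1 + 1] ∈ gridF n) ↔ ¬ (v 1 = n) := by
      simp [mem_gridF]; omega
    have m4 : (![v 0, v 1 - 1] ∈ gridF n) ↔ ¬ (v 1 = 1) := by
      simp [mem_gridF]; omega
    simp only [m1, m2, m3, m4, not_not]
    split_ifs <;> omega
  rw [Finset.sum_congr rfl key, Finset.sum_add_distrib, Finset.sum_add_distrib,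
    Finset.sum_add_distrib]
  have c1 : ∀ (i : Fin 2) (c : ℕ), 1 ≤ c → c ≤ n →
      ∑ v ∈ gridF n, (if v i = c then 1 else 0) = n := by
    intro i c hc hc'
    rw [← Finset.card_filter]
    exact card_filter_coord i c hc hc'
  rw [c1 0 n hn le_rfl, c1 0 1 le_rfl hn, c1 1 n hn le_rfl, c1 1 1 le_rfl hn]
  omega


lemma infected_succ (n d r : ℕ) (A : Set (Fin d → ℕ)) (t : ℕ) :
    infected n d r A (t + 1) = bpStep n d r (infected n d r A t) :=
  Function.iterate_succ_apply' _ _ _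

lemma infected_mono_step (n d r : ℕ) (A : Set (Fin d → ℕ)) (t : ℕ) :
    infected n d r A t ⊆ infected n d r A (t + 1) := by
  rw [infected_succ]; exact Set.subset_union_left

lemma infected_mono (n d r : ℕ) (A : Set (Fin d → ℕ)) {s t : ℕ} (h : s ≤ t) :
    infected n d r A s ⊆ infected n d r A t := by
  induction t with
  | zero => simp_all
  | succ t ih =>
    rcases Nat.lt_or_ge s (t+1) with h' | h'
    · exact (ih (by omega)).trans (infected_mono_step n d r A t)
    · have : s = t + 1 := by omega
      subst this; rfl

theorem tight_growth_dim_two (n : ℕ) (hn : 1 ≤ n) (A : Set (Fin 2 → ℕ))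
    (hA : A ⊆ gridSet n 2) (hperc : percolates n 2 2 A) (hcard : A.ncard = n) :
    (∀ (t : ℕ) (v : Fin 2 → ℕ), v ∈ infected n 2 2 A (t + 1) → v ∉ infected n 2 2 A t →
      {u ∈ infected n 2 2 A t | gridAdj u v}.ncard = 2) ∧
    (∀ (t : ℕ) (u v : Fin 2 → ℕ), gridAdj u v →
      u ∈ infected n 2 2 A (t + 1) → u ∉ infected n 2 2 A t →
      v ∈ infected n 2 2 A (t + 1) → v ∉ infected n 2 2 A t →
      isCorner n u ∨ isCorner n v) := by
  classical
  have hgfin : (gridSet n 2).Finite := by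
    rw [← coe_gridF]; exact (gridF n).finite_toSet
  have hsub : ∀ t, infected n 2 2 A t ⊆ gridSet n 2 := by
    intro t
    induction t with
    | zero => exact hA
    | succ t ih =>
      rw [infected_succ]
      rintro v (hv | hv)
      · exact ih hv
      · exact hv.1
  set F : ℕ → Finset V2 := fun t => (hgfin.subset (hsub t)).toFinset with hFdef
  have hFmem : ∀ t v, v ∈ F t ↔ v ∈ infected n 2 2 A t := by
    intro t v; exact Set.Finite.mem_toFinset _
  have hcoords : ∀ t, ∀ v ∈ F t, 1 ≤ v 0 ∧ 1 ≤ v 1 := by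
    intro t v hv
    have h := hsub t ((hFmem t v).mp hv)
    exact ⟨(h 0).1, (h 1).1⟩
  have hFsub : ∀ s t, s ≤ t → F s ⊆ F t := by
    intro s t hst v hv
    exact (hFmem t v).mpr (infected_mono n 2 2 A hst ((hFmem s v).mp hv))
  have hFgrid : ∀ t, F t ⊆ gridF n := by
    intro t v hv
    have := hsub t ((hFmem t v).mp hv)
    rw [← coe_gridF] at this
    exact this
  -- newly infected vertices have ≥ 2 infected neighbours
  have hdeg2 : ∀ t v, v ∈ F (t+1) → v ∉ F t →
      v ∈ gridSet n 2 ∧ 2 ≤ degF (F t) v ∧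
        {u ∈ infected n 2 2 A t | gridAdj u v}.ncard = degF (F t) v := by
    intro t v hv1 hv0
    have hv1' := (hFmem (t+1) v).mp hv1
    rw [infected_succ] at hv1'
    have hv0' : v ∉ infected n 2 2 A t := fun h => hv0 ((hFmem t v).mpr h)
    rcases hv1' with h | h
    · exact absurd h hv0'
    · obtain ⟨hvg, hge⟩ := h
      have hvc : 1 ≤ v 0 ∧ 1 ≤ v 1 := ⟨(hvg 0).1, (hvg 1).1⟩
      have hset : {u ∈ infected n 2 2 A t | gridAdj u v} = ↑((nbr v) ∩ F t) := by
        ext u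
        simp only [Set.mem_setOf_eq, Finset.coe_inter, Set.mem_inter_iff,
          Finset.mem_coe, hFmem]
        rw [adj_char hvc.1 hvc.2]
        tauto
      have hnc : {u ∈ infected n 2 2 A t | gridAdj u v}.ncard = degF (F t) v := by
        rw [hset, Set.ncard_coe_finset]; rfl
      exact ⟨hvg, by rw [← hnc]; exact hge, hnc⟩
  -- the perimeter step identity
  have hstep : ∀ t,
      perim (F (t+1)) + (2 * ∑ v ∈ F (t+1) \ F t, degF (F t) v
        + ∑ v ∈ F (t+1) \ F t, degF (F (t+1) \ F t) v)
      = perim (F t) + 4 * (F (t+1) \ F t).card := by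
    intro t
    have h := perim_step (S := F t) (N := F (t+1) \ F t) Finset.disjoint_sdiff
      (hcoords t) (fun v hv => hcoords (t+1) v (Finset.sdiff_subset hv))
    rwa [Finset.union_sdiff_of_subset (hFsub t (t+1) (by omega))] at h
  have hge2 : ∀ t, ∀ v ∈ F (t+1) \ F t, 2 ≤ degF (F t) v := by
    intro t v hv
    rw [Finset.mem_sdiff] at hv
    exact (hdeg2 t v hv.1 hv.2).2.1
  have hsumge : ∀ t, 2 * (F (t+1) \ F t).card ≤ ∑ v ∈ F (t+1) \ F t, degF (F t) v := by
    intro t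
    calc 2 * (F (t+1) \ F t).card = ∑ _v ∈ F (t+1) \ F t, 2 := by
          rw [Finset.sum_const, smul_eq_mul, mul_comm]
      _ ≤ _ := Finset.sum_le_sum (hge2 t)
  have hmonoP : ∀ t, perim (F (t+1)) ≤ perim (F t) := by
    intro t
    have h1 := hstep t
    have h2 := hsumge t
    omega
  have hantiP : ∀ s t, s ≤ t → perim (F t) ≤ perim (F s) := by
    intro s t hst
    induction t with
    | zero => simp_all
    | succ t ih =>
      rcases Nat.lt_or_ge s (t+1) with h' | h'
      · exact le_trans (hmonoP t) (ih (by omega))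
      · have : s = t + 1 := by omega
        subst this; rfl
  -- a time at which the whole grid is infected
  have hT : ∃ T, F T = gridF n := by
    have hex : ∀ v ∈ gridF n, ∃ t, v ∈ infected n 2 2 A t := by
      intro v hv
      have hv' : v ∈ gridSet n 2 := by rw [← coe_gridF]; exact hv
      have := hperc hv'
      rw [bpClosure, Set.mem_iUnion] at this
      exact this
    refine ⟨(gridF n).sup (fun v =>
      if h : ∃ t, v ∈ infected n 2 2 A t then Nat.find h else 0), ?_⟩
    apply Finset.Subset.antisymm (hFgrid _)
    intro v hv
    rw [hFmem]
    have h := hex v hv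
    refine infected_mono n 2 2 A ?_ (Nat.find_spec h)
    have := Finset.le_sup (f := fun v =>
      if h : ∃ t, v ∈ infected n 2 2 A t then Nat.find h else 0) hv
    simpa [dif_pos h] using this
  -- initial perimeter bound
  have hF0 : (F 0).card = n := by
    have : (↑(F 0) : Set V2) = A := Set.Finite.coe_toFinset _
    rw [← hcard, ← this, Set.ncard_coe_finset]
  have hperimA : perim (F 0) ≤ 4 * n := by
    rw [← hF0]; exact perim_le (F 0)
  -- perimeter is constantly 4n
  have hPeq : ∀ t, perim (F t) = 4 * n := by
    intro t
    obtain ⟨T, hTg⟩ := hT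
    have h1 : F (max t T) = gridF n := by
      apply Finset.Subset.antisymm (hFgrid _)
      rw [← hTg]
      exact hFsub T (max t T) (le_max_right t T)
    have h2 : perim (F (max t T)) = 4 * n := by rw [h1]; exact perim_grid hn
    have h3 := hantiP t (max t T) (le_max_left t T)
    have h4 := hantiP 0 t (Nat.zero_le t)
    omega
  -- the key exact equalities at every step
  have hkey : ∀ t, (∀ v ∈ F (t+1) \ F t, degF (F t) v = 2) ∧
      (∀ v ∈ F (t+1) \ F t, degF (F (t+1) \ F t) v = 0) := by
    intro t
    have hst := hstep t
    rw [hPeq t, hPeq (t+1)] at hst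
    have h2 := hsumge t
    have hSd : ∑ v ∈ F (t+1) \ F t, degF (F t) v = 2 * (F (t+1) \ F t).card ∧
        ∑ v ∈ F (t+1) \ F t, degF (F (t+1) \ F t) v = 0 := by omega
    constructor
    · intro v hv
      by_contra hne
      have h3 : 2 < degF (F t) v := lt_of_le_of_ne (hge2 t v hv) (Ne.symm hne)
      have h4 : ∑ _v ∈ F (t+1) \ F t, 2 < ∑ v ∈ F (t+1) \ F t, degF (F t) v :=
        Finset.sum_lt_sum (fun i hi => hge2 t i hi) ⟨v, hv, h3⟩
      rw [Finset.sum_const, smul_eq_mul] at h4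
      omega
    · intro v hv
      exact (Finset.sum_eq_zero_iff).mp hSd.2 v hv
  constructor
  · intro t v hv1 hv0
    have hv1F : v ∈ F (t+1) := (hFmem (t+1) v).mpr hv1
    have hv0F : v ∉ F t := fun h => hv0 ((hFmem t v).mp h)
    obtain ⟨hvg, _, hnc⟩ := hdeg2 t v hv1F hv0F
    rw [hnc]
    exact (hkey t).1 v (Finset.mem_sdiff.mpr ⟨hv1F, hv0F⟩)
  · intro t u v hadj hu1 hu0 hv1 hv0
    exfalso
    have hvF : v ∈ F (t+1) \ F t := Finset.mem_sdiff.mpr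
      ⟨(hFmem (t+1) v).mpr hv1, fun h => hv0 ((hFmem t v).mp h)⟩
    have huF : u ∈ F (t+1) \ F t := Finset.mem_sdiff.mpr
      ⟨(hFmem (t+1) u).mpr hu1, fun h => hu0 ((hFmem t u).mp h)⟩
    have hvg := hsub (t+1) hv1
    have hvc : 1 ≤ v 0 ∧ 1 ≤ v 1 := ⟨(hvg 0).1, (hvg 1).1⟩
    have humem : u ∈ nbr v ∩ (F (t+1) \ F t) :=
      Finset.mem_inter.mpr ⟨(adj_char hvc.1 hvc.2).mp hadj, huF⟩
    have h0 := (hkey t).2 v hvF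
    rw [degF, Finset.card_eq_zero] at h0
    rw [h0] at humem
    exact absurd humem (Finset.notMem_empty u)
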